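/- Let u, v, w : ℝ^d → ℝ be measurable functions satisfying w((x+y)/2) ≤ ½(u(x) + v(y)) for all x, y ∈ ℝ^d. Then (∫ e^{−u} dx)^{1/2} · (∫ e^{−v} dx)^{1/2} ≤ ∫ e^{−w} dx (Lebesgue integrals over ℝ^d). -/

import Mathlib

open MeasureTheory Real
open scoped Pointwise ENNReal NNReal


set_option maxHeartbeats 1000000 in

/-- One-dimensional Brunn–Minkowski for midpoint sets. -/
lemma bm_dim1 {A B C : Set ℝ} (hA : MeasurableSet A) (hB : MeasurableSet B)
    (hAne : A.Nonempty) (hBne : B.Nonempty)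
    (hsub : ∀ a ∈ A, ∀ b ∈ B, (2:ℝ)⁻¹ * (a + b) ∈ C) :
    volume A + volume B ≤ 2 * volume C := by
  -- compact case
  have key : ∀ K L : Set ℝ, IsCompact K → IsCompact L → K.Nonempty → L.Nonempty →
      K ⊆ A → L ⊆ B → volume K + volume L ≤ 2 * volume C := by
    intro K L hK hL hKne hLne hKA hLB
    set U : Set ℝ := (sInf L +ᵥ K) with hU
    set V : Set ℝ := (sSup K +ᵥ L) with hV
    have hLinf : sInf L ∈ L := hL.sInf_mem hLne
    have hKsup : sSup K ∈ K := hK.sSup_mem hKne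
    have hUV : U ∪ V ⊆ K + L := by
      rintro x (⟨k, hk, rfl⟩ | ⟨l, hl, rfl⟩)
      · exact ⟨k, hk, sInf L, hLinf, by simp [add_comm]⟩
      · exact ⟨sSup K, hKsup, l, hl, rfl⟩
    have hsingle : U ∩ V ⊆ {sSup K + sInf L} := by
      rintro x ⟨⟨k, hk, rfl⟩, ⟨l, hl, hx⟩⟩
      have h1 : k ≤ sSup K := le_csSup hK.bddAbove hk
      have h2 : sInf L ≤ l := csInf_le hL.bddBelow hl
      have hx' : sSup K + l = sInf L + k := hx
      simp only [Set.mem_singleton_iff, vadd_eq_add]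
      linarith
    have hVmeas : MeasurableSet V := (hL.vadd _).measurableSet
    have hmKL : volume K + volume L ≤ volume (K + L) := by
      have h2 := measure_union_add_inter (μ := volume) U hVmeas
      have h0 : volume (U ∩ V) = 0 :=
        measure_mono_null hsingle (measure_singleton _)
      calc volume K + volume L = volume U + volume V := by
            rw [hU, hV, measure_vadd, measure_vadd]
        _ = volume (U ∪ V) + volume (U ∩ V) := h2.symm
        _ = volume (U ∪ V) := by rw [h0, add_zero]
        _ ≤ volume (K + L) := measure_mono hUV
    have hmid : (2:ℝ)⁻¹ • (K + L) ⊆ C := by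
      rintro x ⟨y, ⟨k, hk, l, hl, rfl⟩, rfl⟩
      exact hsub k (hKA hk) l (hLB hl)
    have hhalf : volume ((2:ℝ)⁻¹ • (K + L)) = 2⁻¹ * volume (K + L) := by
      rw [Measure.addHaar_smul]
      have : ENNReal.ofReal |(2:ℝ)⁻¹ ^ Module.finrank ℝ ℝ| = 2⁻¹ := by
        rw [Module.finrank_self, pow_one, abs_of_nonneg (by norm_num),
          ENNReal.ofReal_inv_of_pos (by norm_num)]
        norm_num
      rw [this]
    calc volume K + volume L ≤ volume (K + L) := hmKL
      _ = 2 * ((2:ℝ≥0∞)⁻¹ * volume (K + L)) := by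
          rw [← mul_assoc, ENNReal.mul_inv_cancel (by norm_num) (by norm_num), one_mul]
      _ = 2 * volume ((2:ℝ)⁻¹ • (K + L)) := by rw [hhalf]
      _ ≤ 2 * volume C := mul_le_mul_right (measure_mono hmid) 2
  -- from compacts to measurable sets
  obtain ⟨a₀, ha₀⟩ := hAne
  obtain ⟨b₀, hb₀⟩ := hBne
  have hA' : ∀ r s : ℝ≥0∞, (r < volume A ∨ r = 0) → (s < volume B ∨ s = 0) →
      r + s ≤ 2 * volume C := by
    have getK : ∀ (D : Set ℝ) (d : ℝ), MeasurableSet D → d ∈ D → ∀ r : ℝ≥0∞,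
        (r < volume D ∨ r = 0) → ∃ K, IsCompact K ∧ K.Nonempty ∧ K ⊆ D ∧ r ≤ volume K := by
      intro D d hD hd r hr
      rcases hr with hr | rfl
      · obtain ⟨K, hKD, hKc, hKr⟩ := hD.exists_lt_isCompact hr
        exact ⟨K ∪ {d}, hKc.union isCompact_singleton, ⟨d, Or.inr rfl⟩,
          Set.union_subset hKD (by simpa using hd),
          le_of_lt (hKr.trans_le (measure_mono Set.subset_union_left))⟩
      · exact ⟨{d}, isCompact_singleton, ⟨d, rfl⟩, by simpa using hd, zero_le⟩
    intro r s hr hs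
    obtain ⟨K, hKc, hKne, hKA, hKr⟩ := getK A a₀ hA ha₀ r hr
    obtain ⟨L, hLc, hLne, hLB, hLs⟩ := getK B b₀ hB hb₀ s hs
    exact le_trans (add_le_add hKr hLs) (key K L hKc hLc hKne hLne hKA hLB)
  -- conclude
  rcases eq_or_ne (volume A) 0 with h0 | h0
  · rw [h0, zero_add]
    refine le_of_forall_lt_imp_le_of_dense fun s hs => ?_
    simpa using hA' 0 s (Or.inr rfl) (Or.inl hs)
  rcases eq_or_ne (volume B) 0 with h1 | h1
  · rw [h1, add_zero]
    refine le_of_forall_lt_imp_le_of_dense fun r hr => ?_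
    simpa using hA' r 0 (Or.inl hr) (Or.inr rfl)
  have eA : volume A = ⨆ r ∈ Set.Iio (volume A), r := by
    refine le_antisymm (le_of_forall_lt_imp_le_of_dense fun c hc => ?_) (iSup₂_le fun r hr => le_of_lt hr)
    exact le_iSup₂_of_le c hc le_rfl
  have eB : volume B = ⨆ s ∈ Set.Iio (volume B), s := by
    refine le_antisymm (le_of_forall_lt_imp_le_of_dense fun c hc => ?_) (iSup₂_le fun s hs => le_of_lt hs)
    exact le_iSup₂_of_le c hc le_rfl
  rw [eA, eB]
  exact ENNReal.biSup_add_biSup_le (s := Set.Iio (volume A)) (t := Set.Iio (volume B)) ⟨0, pos_iff_ne_zero.mpr h0⟩ ⟨0, pos_iff_ne_zero.mpr h1⟩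
    fun r hr s hs => hA' r s (Or.inl (Set.mem_Iio.mp hr)) (Or.inl (Set.mem_Iio.mp hs))

lemma ennreal_amgm (a b : ℝ≥0∞) : a ^ (1/2:ℝ) * b ^ (1/2:ℝ) ≤ 2⁻¹ * (a + b) := by
  rcases eq_or_ne a ∞ with rfl | ha
  · have h : (2:ℝ≥0∞)⁻¹ * (∞ + b) = ∞ := by
      rw [top_add, ENNReal.mul_top (by norm_num)]
    rw [h]; exact le_top
  rcases eq_or_ne b ∞ with rfl | hb
  · have h : (2:ℝ≥0∞)⁻¹ * (a + ∞) = ∞ := by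
      rw [add_top, ENNReal.mul_top (by norm_num)]
    rw [h]; exact le_top
  lift a to ℝ≥0 using ha
  lift b to ℝ≥0 using hb
  have h := NNReal.geom_mean_le_arith_mean2_weighted (w₁ := 2⁻¹) (w₂ := 2⁻¹) (p₁ := a) (p₂ := b)
    (by rw [← two_mul, mul_inv_cancel₀ (two_ne_zero)])
  have hc : ((2⁻¹:ℝ≥0):ℝ) = (1/2:ℝ) := by norm_num
  calc (a:ℝ≥0∞) ^ (1/2:ℝ) * (b:ℝ≥0∞) ^ (1/2:ℝ)
      = ((a ^ (((2⁻¹:ℝ≥0)):ℝ) * b ^ (((2⁻¹:ℝ≥0)):ℝ) : ℝ≥0) : ℝ≥0∞) := by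
        rw [ENNReal.coe_mul, ENNReal.coe_rpow_of_nonneg _ (by norm_num : (0:ℝ) ≤ ((2⁻¹:ℝ≥0):ℝ)),
          ENNReal.coe_rpow_of_nonneg _ (by norm_num : (0:ℝ) ≤ ((2⁻¹:ℝ≥0):ℝ)), hc]
    _ ≤ ((2⁻¹ * a + 2⁻¹ * b : ℝ≥0) : ℝ≥0∞) := by exact_mod_cast h
    _ = 2⁻¹ * ((a:ℝ≥0∞) + b) := by
        push_cast
        rw [mul_add]

lemma ennreal_div_mul_div (a b c d : ℝ≥0∞) (hb : b ≠ 0) (hb' : b ≠ ∞) :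
    a / b * (c / d) = a * c / (b * d) := by
  rw [div_eq_mul_inv, div_eq_mul_inv, div_eq_mul_inv, ENNReal.mul_inv (Or.inl hb) (Or.inl hb')]
  ring

set_option maxHeartbeats 1000000 in
lemma pl_dim1_bounded (F G H : ℝ → ℝ≥0∞) (hF : Measurable F) (hG : Measurable G)
    (hH : Measurable H)
    (hyp : ∀ x y : ℝ, F x ^ (1/2:ℝ) * G y ^ (1/2:ℝ) ≤ H ((2:ℝ)⁻¹ * (x + y)))
    (hMF : (⨆ x, F x) ≠ ∞) (hMG : (⨆ x, G x) ≠ ∞) :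
    (∫⁻ x, F x) ^ (1/2:ℝ) * (∫⁻ x, G x) ^ (1/2:ℝ) ≤ ∫⁻ x, H x := by
  rcases eq_or_ne (∫⁻ x, F x) 0 with hIF | hIF
  · rw [hIF, ENNReal.zero_rpow_of_pos (by norm_num), zero_mul]; exact zero_le
  rcases eq_or_ne (∫⁻ x, G x) 0 with hIG | hIG
  · rw [hIG, ENNReal.zero_rpow_of_pos (by norm_num), mul_zero]; exact zero_le
  set MF := ⨆ x, F x with hMFdef
  set MG := ⨆ x, G x with hMGdef
  have hMF0 : MF ≠ 0 := by
    intro h0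
    apply hIF
    have : ∀ x, F x = 0 := fun x => le_antisymm (h0 ▸ le_iSup F x) (zero_le)
    simp [this]
  have hMG0 : MG ≠ 0 := by
    intro h0
    apply hIG
    have : ∀ x, G x = 0 := fun x => le_antisymm (h0 ▸ le_iSup G x) (zero_le)
    simp [this]
  set c : ℝ≥0∞ := MF ^ (1/2:ℝ) * MG ^ (1/2:ℝ) with hcdef
  have hc0 : c ≠ 0 :=
    mul_ne_zero (ENNReal.rpow_pos (pos_iff_ne_zero.mpr hMF0) hMF).ne'
      (ENNReal.rpow_pos (pos_iff_ne_zero.mpr hMG0) hMG).ne'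
  have hct : c ≠ ∞ := ENNReal.mul_ne_top
    (ENNReal.rpow_ne_top_of_nonneg (by norm_num) hMF)
    (ENNReal.rpow_ne_top_of_nonneg (by norm_num) hMG)
  set F' : ℝ → ℝ≥0∞ := fun x => F x / MF with hF'def
  set G' : ℝ → ℝ≥0∞ := fun y => G y / MG with hG'def
  set H' : ℝ → ℝ≥0∞ := fun z => min (H z / c) 1 with hH'def
  have hF'm : Measurable F' := hF.div_const _
  have hG'm : Measurable G' := hG.div_const _
  have hH'm : Measurable H' := (hH.div_const _).min measurable_const
  have hF'le : ∀ x, F' x ≤ 1 := fun x => by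
    rw [hF'def]
    calc F x / MF ≤ MF / MF := ENNReal.div_le_div_right (le_iSup F x) _
      _ = 1 := ENNReal.div_self hMF0 hMF
  have hG'le : ∀ y, G' y ≤ 1 := fun y => by
    rw [hG'def]
    calc G y / MG ≤ MG / MG := ENNReal.div_le_div_right (le_iSup G y) _
      _ = 1 := ENNReal.div_self hMG0 hMG
  have hH'le : ∀ z, H' z ≤ 1 := fun z => min_le_right _ _
  have hF'ne : ∀ x, F' x ≠ ∞ := fun x => ((hF'le x).trans_lt ENNReal.one_lt_top).ne
  have hG'ne : ∀ y, G' y ≠ ∞ := fun y => ((hG'le y).trans_lt ENNReal.one_lt_top).ne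
  have hH'ne : ∀ z, H' z ≠ ∞ := fun z => ((hH'le z).trans_lt ENNReal.one_lt_top).ne
  -- main hypothesis for normalized functions
  have hyp' : ∀ x y : ℝ, F' x ^ (1/2:ℝ) * G' y ^ (1/2:ℝ) ≤ H' ((2:ℝ)⁻¹ * (x + y)) := by
    intro x y
    refine le_min ?_ ?_
    · rw [hF'def, hG'def, ENNReal.div_rpow_of_nonneg _ _ (by norm_num),
        ENNReal.div_rpow_of_nonneg _ _ (by norm_num),
        ennreal_div_mul_div _ _ _ _
          (ENNReal.rpow_pos (pos_iff_ne_zero.mpr hMF0) hMF).ne'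
          (ENNReal.rpow_ne_top_of_nonneg (by norm_num) hMF)]
      exact ENNReal.div_le_div_right (hyp x y) _
    · exact mul_le_one' (ENNReal.rpow_le_one (hF'le x) (by norm_num))
        (ENNReal.rpow_le_one (hG'le y) (by norm_num))
  -- real versions
  set f' : ℝ → ℝ := fun x => (F' x).toReal with hf'def
  set g' : ℝ → ℝ := fun y => (G' y).toReal with hg'def
  set h' : ℝ → ℝ := fun z => (H' z).toReal with hh'def
  have hf'm : Measurable f' := hF'm.ennreal_toReal
  have hg'm : Measurable g' := hG'm.ennreal_toReal
  have hh'm : Measurable h' := hH'm.ennreal_toReal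
  have hf'le : ∀ x, f' x ≤ 1 := fun x => by
    simpa using ENNReal.toReal_mono (by norm_num) (hF'le x)
  have hg'le : ∀ y, g' y ≤ 1 := fun y => by
    simpa using ENNReal.toReal_mono (by norm_num) (hG'le y)
  -- supremum of F' is 1
  have hsupF' : (⨆ x, F' x) = 1 := by
    rw [hF'def]
    simp only [← ENNReal.iSup_div, ← hMFdef]
    exact ENNReal.div_self hMF0 hMF
  have hsupG' : (⨆ y, G' y) = 1 := by
    rw [hG'def]
    simp only [← ENNReal.iSup_div, ← hMGdef]
    exact ENNReal.div_self hMG0 hMG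
  -- level set inequality
  have level : ∀ t ∈ Set.Ioi (0:ℝ),
      volume {a | t < f' a} + volume {b | t < g' b} ≤ 2 * volume {z | t < h' z} := by
    intro t ht
    rcases le_or_gt 1 t with h1t | ht1
    · have e1 : {a | t < f' a} = (∅ : Set ℝ) := by
        ext a; simp only [Set.mem_setOf_eq, Set.mem_empty_iff_false, iff_false, not_lt]
        exact (hf'le a).trans h1t
      have e2 : {b | t < g' b} = (∅ : Set ℝ) := by
        ext b; simp only [Set.mem_setOf_eq, Set.mem_empty_iff_false, iff_false, not_lt]
        exact (hg'le b).trans h1t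
      rw [e1, e2]
      simp
    · have ht0 : (0:ℝ) < t := ht
      -- nonemptiness
      have hne : ∀ (P : ℝ → ℝ≥0∞), (⨆ x, P x) = 1 → (∀ x, P x ≠ ∞) →
          {a | t < (P a).toReal}.Nonempty := by
        intro P hsup hPne
        have : ENNReal.ofReal t < ⨆ x, P x := by
          rw [hsup]; exact ENNReal.ofReal_lt_one.mpr ht1
        obtain ⟨x, hx⟩ := lt_iSup_iff.mp this
        exact ⟨x, (ENNReal.ofReal_lt_iff_lt_toReal ht0.le (hPne x)).mp hx⟩
      -- midpoint property
      have hmid : ∀ a ∈ {a | t < f' a}, ∀ b ∈ {b | t < g' b},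
          (2:ℝ)⁻¹ * (a + b) ∈ {z | t < h' z} := by
        intro a ha b hb
        have hfa : 0 ≤ f' a := ENNReal.toReal_nonneg
        have hgb : 0 ≤ g' b := ENNReal.toReal_nonneg
        have key : t < f' a ^ (1/2:ℝ) * g' b ^ (1/2:ℝ) := by
          have h2 : t = t ^ (1/2:ℝ) * t ^ (1/2:ℝ) := by
            rw [← Real.rpow_add ht0]; norm_num
          rw [h2]
          exact mul_lt_mul'' (Real.rpow_lt_rpow ht0.le ha (by norm_num))
            (Real.rpow_lt_rpow ht0.le hb (by norm_num))
            (Real.rpow_nonneg ht0.le _) (Real.rpow_nonneg ht0.le _)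
        have keq : f' a ^ (1/2:ℝ) * g' b ^ (1/2:ℝ)
            = (F' a ^ (1/2:ℝ) * G' b ^ (1/2:ℝ)).toReal := by
          rw [ENNReal.toReal_mul, ENNReal.toReal_rpow, ENNReal.toReal_rpow]
        have := ENNReal.toReal_mono (hH'ne _) (hyp' a b)
        exact lt_of_lt_of_le (keq ▸ key) this
      exact bm_dim1 (hf'm measurableSet_Ioi)
        (hg'm measurableSet_Ioi) (hne F' hsupF' hF'ne) (hne G' hsupG' hG'ne) hmid
  -- layer cake
  have lc : ∀ (P : ℝ → ℝ≥0∞), Measurable P → (∀ x, P x ≠ ∞) →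
      ∫⁻ x, P x = ∫⁻ t in Set.Ioi (0:ℝ), volume {a | t < (P a).toReal} := by
    intro P hPm hPne
    rw [← lintegral_eq_lintegral_meas_lt volume
      (Filter.Eventually.of_forall fun x => ENNReal.toReal_nonneg)
      hPm.ennreal_toReal.aemeasurable]
    exact lintegral_congr fun x => (ENNReal.ofReal_toReal (hPne x)).symm
  have meas_level : ∀ (p : ℝ → ℝ), Measurable (fun t : ℝ => volume {a | t < p a}) := by
    intro p
    exact Antitone.measurable fun s t hst =>
      measure_mono fun a (ha : t < p a) => lt_of_le_of_lt hst ha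
  have main : (∫⁻ x, F' x) + (∫⁻ y, G' y) ≤ 2 * ∫⁻ z, H' z := by
    rw [lc F' hF'm hF'ne, lc G' hG'm hG'ne, lc H' hH'm hH'ne,
      ← lintegral_add_left (meas_level f') _]
    calc ∫⁻ t in Set.Ioi (0:ℝ), (volume {a | t < f' a} + volume {b | t < g' b})
        ≤ ∫⁻ t in Set.Ioi (0:ℝ), 2 * volume {z | t < h' z} :=
          setLIntegral_mono (measurable_const.mul (meas_level h')) level
      _ = 2 * ∫⁻ t in Set.Ioi (0:ℝ), volume {z | t < h' z} :=
          lintegral_const_mul' 2 _ (by norm_num)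
  have step : (∫⁻ x, F' x) ^ (1/2:ℝ) * (∫⁻ y, G' y) ^ (1/2:ℝ) ≤ ∫⁻ z, H' z := by
    calc (∫⁻ x, F' x) ^ (1/2:ℝ) * (∫⁻ y, G' y) ^ (1/2:ℝ)
        ≤ 2⁻¹ * ((∫⁻ x, F' x) + ∫⁻ y, G' y) := ennreal_amgm _ _
      _ ≤ 2⁻¹ * (2 * ∫⁻ z, H' z) := mul_le_mul_right main _
      _ = ∫⁻ z, H' z := by
          rw [← mul_assoc, ENNReal.inv_mul_cancel (by norm_num) (by norm_num), one_mul]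
  have intF' : ∫⁻ x, F' x = (∫⁻ x, F x) / MF := by
    simp only [hF'def, div_eq_mul_inv]
    rw [lintegral_mul_const _ hF]
  have intG' : ∫⁻ y, G' y = (∫⁻ y, G y) / MG := by
    simp only [hG'def, div_eq_mul_inv]
    rw [lintegral_mul_const _ hG]
  have intH' : ∫⁻ z, H' z ≤ (∫⁻ z, H z) / c := by
    calc ∫⁻ z, H' z ≤ ∫⁻ z, H z / c := lintegral_mono fun z => min_le_left _ _
      _ = (∫⁻ z, H z) / c := by
          simp only [div_eq_mul_inv]
          rw [lintegral_mul_const _ hH]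
  calc (∫⁻ x, F x) ^ (1/2:ℝ) * (∫⁻ x, G x) ^ (1/2:ℝ)
      = (MF * ((∫⁻ x, F x)/MF)) ^ (1/2:ℝ) * (MG * ((∫⁻ x, G x)/MG)) ^ (1/2:ℝ) := by
        rw [ENNReal.mul_div_cancel hMF0 hMF, ENNReal.mul_div_cancel hMG0 hMG]
    _ = c * (((∫⁻ x, F x)/MF) ^ (1/2:ℝ) * ((∫⁻ x, G x)/MG) ^ (1/2:ℝ)) := by
        rw [ENNReal.mul_rpow_of_nonneg _ _ (by norm_num),
          ENNReal.mul_rpow_of_nonneg _ _ (by norm_num), hcdef]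
        ring
    _ ≤ c * ((∫⁻ z, H z) / c) := by
        refine mul_le_mul_right ?_ c
        rw [← intF', ← intG']
        exact step.trans intH'
    _ = ∫⁻ z, H z := ENNReal.mul_div_cancel hc0 hct

lemma rpow_half_ne_zero {a : ℝ≥0∞} (ha : a ≠ 0) : a ^ (1/2:ℝ) ≠ 0 := by
  rw [Ne, ENNReal.rpow_eq_zero_iff]
  rintro (⟨h, -⟩ | ⟨-, hlt⟩)
  exacts [ha h, absurd hlt (by norm_num)]

lemma iSup_min_natCast (a : ℝ≥0∞) : ⨆ n : ℕ, min a (n : ℝ≥0∞) = a := by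
  refine le_antisymm (iSup_le fun n => min_le_left _ _) ?_
  rcases eq_or_ne a ∞ with rfl | ha
  · simp [ENNReal.iSup_natCast]
  · obtain ⟨n, hn⟩ := ENNReal.exists_nat_gt ha
    exact le_iSup_of_le n (by rw [min_eq_left hn.le])

lemma pl_dim1 (F G H : ℝ → ℝ≥0∞) (hF : Measurable F) (hG : Measurable G)
    (hH : Measurable H)
    (hyp : ∀ x y : ℝ, F x ^ (1/2:ℝ) * G y ^ (1/2:ℝ) ≤ H ((2:ℝ)⁻¹ * (x + y))) :
    (∫⁻ x, F x) ^ (1/2:ℝ) * (∫⁻ x, G x) ^ (1/2:ℝ) ≤ ∫⁻ x, H x := by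
  rcases eq_or_ne (∫⁻ x, F x) 0 with hIF | hIF
  · rw [hIF, ENNReal.zero_rpow_of_pos (by norm_num), zero_mul]; exact zero_le
  rcases eq_or_ne (∫⁻ x, G x) 0 with hIG | hIG
  · rw [hIG, ENNReal.zero_rpow_of_pos (by norm_num), mul_zero]; exact zero_le
  set Fn : ℕ → ℝ → ℝ≥0∞ := fun n x => min (F x) n with hFndef
  set Gn : ℕ → ℝ → ℝ≥0∞ := fun n y => min (G y) n with hGndef
  have hFnm : ∀ n, Measurable (Fn n) := fun n => hF.min measurable_const
  have hGnm : ∀ n, Measurable (Gn n) := fun n => hG.min measurable_const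
  have hFnmono : Monotone Fn := fun m n hmn x =>
    min_le_min le_rfl (by exact_mod_cast Nat.cast_le.mpr hmn)
  have hGnmono : Monotone Gn := fun m n hmn y =>
    min_le_min le_rfl (by exact_mod_cast Nat.cast_le.mpr hmn)
  have bound : ∀ n : ℕ, (∫⁻ x, Fn n x) ^ (1/2:ℝ) * (∫⁻ y, Gn n y) ^ (1/2:ℝ) ≤ ∫⁻ z, H z := by
    intro n
    refine pl_dim1_bounded _ _ _ (hFnm n) (hGnm n) hH (fun x y => ?_) ?_ ?_
    · refine le_trans ?_ (hyp x y)
      exact mul_le_mul' (ENNReal.rpow_le_rpow (min_le_left _ _) (by norm_num))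
        (ENNReal.rpow_le_rpow (min_le_left _ _) (by norm_num))
    · exact ne_top_of_le_ne_top (ENNReal.natCast_ne_top n)
        (iSup_le fun x => min_le_right _ _)
    · exact ne_top_of_le_ne_top (ENNReal.natCast_ne_top n)
        (iSup_le fun y => min_le_right _ _)
  have hIFn : Filter.Tendsto (fun n => ∫⁻ x, Fn n x) Filter.atTop (nhds (∫⁻ x, F x)) := by
    have e : ∫⁻ x, F x = ⨆ n, ∫⁻ x, Fn n x := by
      rw [← lintegral_iSup hFnm (fun m n hmn x => hFnmono hmn x)]
      exact lintegral_congr fun x => (iSup_min_natCast (F x)).symm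
    rw [e]
    exact tendsto_atTop_iSup fun m n hmn => lintegral_mono (hFnmono hmn)
  have hIGn : Filter.Tendsto (fun n => ∫⁻ y, Gn n y) Filter.atTop (nhds (∫⁻ y, G y)) := by
    have e : ∫⁻ y, G y = ⨆ n, ∫⁻ y, Gn n y := by
      rw [← lintegral_iSup hGnm (fun m n hmn y => hGnmono hmn y)]
      exact lintegral_congr fun y => (iSup_min_natCast (G y)).symm
    rw [e]
    exact tendsto_atTop_iSup fun m n hmn => lintegral_mono (hGnmono hmn)
  have t1 : Filter.Tendsto (fun n => (∫⁻ x, Fn n x) ^ (1/2:ℝ)) Filter.atTop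
      (nhds ((∫⁻ x, F x) ^ (1/2:ℝ))) :=
    (ENNReal.continuous_rpow_const.tendsto _).comp hIFn
  have t2 : Filter.Tendsto (fun n => (∫⁻ y, Gn n y) ^ (1/2:ℝ)) Filter.atTop
      (nhds ((∫⁻ y, G y) ^ (1/2:ℝ))) :=
    (ENNReal.continuous_rpow_const.tendsto _).comp hIGn
  have tmul := ENNReal.Tendsto.mul t1 (Or.inl (rpow_half_ne_zero hIF)) t2
    (Or.inl (rpow_half_ne_zero hIG))
  exact le_of_tendsto tmul (Filter.Eventually.of_forall bound)

lemma insertNth0_add {d : ℕ} (t s : ℝ) (z w : Fin d → ℝ) :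
    Fin.insertNth (α := fun _ => ℝ) 0 t z + Fin.insertNth 0 s w
      = Fin.insertNth 0 (t + s) (z + w) := by
  funext j
  refine Fin.succAboveCases 0 ?_ ?_ j
  · simp
  · intro k
    simp [Fin.insertNth_apply_succAbove]

lemma insertNth0_smul {d : ℕ} (c t : ℝ) (z : Fin d → ℝ) :
    c • Fin.insertNth (α := fun _ => ℝ) 0 t z = Fin.insertNth 0 (c * t) (c • z) := by
  funext j
  refine Fin.succAboveCases 0 ?_ ?_ j
  · simp
  · intro k
    simp [Fin.insertNth_apply_succAbove]

lemma pl_pi : ∀ (d : ℕ) (F G H : (Fin d → ℝ) → ℝ≥0∞), Measurable F → Measurable G →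
    Measurable H →
    (∀ x y, F x ^ (1/2:ℝ) * G y ^ (1/2:ℝ) ≤ H ((2:ℝ)⁻¹ • (x + y))) →
    (∫⁻ x, F x) ^ (1/2:ℝ) * (∫⁻ x, G x) ^ (1/2:ℝ) ≤ ∫⁻ x, H x := by
  intro d
  induction d with
  | zero =>
    intro F G H hF hG hH hyp
    have hvol : (volume : Measure (Fin 0 → ℝ)) = Measure.dirac 0 := by
      rw [volume_pi, Measure.pi_of_empty (fun _ => volume) 0]
    rw [hvol, lintegral_dirac' _ hF, lintegral_dirac' _ hG, lintegral_dirac' _ hH]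
    have h2 := hyp 0 0
    have e : (2:ℝ)⁻¹ • ((0 : Fin 0 → ℝ) + 0) = (0 : Fin 0 → ℝ) := Subsingleton.elim _ _
    rwa [e] at h2
  | succ d ih =>
    intro F G H hF hG hH hyp
    set e := MeasurableEquiv.piFinSuccAbove (fun _ : Fin (d+1) => ℝ) 0 with hedef
    have mp : MeasurePreserving e volume
        ((volume : Measure ℝ).prod (volume : Measure (Fin d → ℝ))) := by
      have h2 := measurePreserving_piFinSuccAbove (fun _ : Fin (d+1) => (volume : Measure ℝ)) 0
      rw [volume_pi, volume_pi]
      exact h2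
    have mps : MeasurePreserving e.symm
        ((volume : Measure ℝ).prod (volume : Measure (Fin d → ℝ))) volume := mp.symm e
    set F' : ℝ × (Fin d → ℝ) → ℝ≥0∞ := fun p => F (e.symm p) with hF'def
    set G' : ℝ × (Fin d → ℝ) → ℝ≥0∞ := fun p => G (e.symm p) with hG'def
    set H' : ℝ × (Fin d → ℝ) → ℝ≥0∞ := fun p => H (e.symm p) with hH'def
    have hF'm : Measurable F' := hF.comp e.symm.measurable
    have hG'm : Measurable G' := hG.comp e.symm.measurable
    have hH'm : Measurable H' := hH.comp e.symm.measurable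
    -- symm is insertNth
    have hsymm : ∀ (t : ℝ) (z : Fin d → ℝ), e.symm (t, z) = Fin.insertNth 0 t z :=
      fun t z => rfl
    set Fb : ℝ → ℝ≥0∞ := fun t => ∫⁻ z, F' (t, z) with hFbdef
    set Gb : ℝ → ℝ≥0∞ := fun s => ∫⁻ w, G' (s, w) with hGbdef
    set Hb : ℝ → ℝ≥0∞ := fun r => ∫⁻ z, H' (r, z) with hHbdef
    have hFbm : Measurable Fb := Measurable.lintegral_prod_right hF'm
    have hGbm : Measurable Gb := Measurable.lintegral_prod_right hG'm
    have hHbm : Measurable Hb := Measurable.lintegral_prod_right hH'm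
    have hbar : ∀ t s : ℝ, Fb t ^ (1/2:ℝ) * Gb s ^ (1/2:ℝ) ≤ Hb ((2:ℝ)⁻¹ * (t + s)) := by
      intro t s
      refine ih (fun z => F' (t, z)) (fun w => G' (s, w))
        (fun z => H' ((2:ℝ)⁻¹ * (t + s), z))
        (hF'm.comp measurable_prodMk_left) (hG'm.comp measurable_prodMk_left)
        (hH'm.comp measurable_prodMk_left) ?_
      intro z w
      have h2 := hyp (e.symm (t, z)) (e.symm (s, w))
      have key : (2:ℝ)⁻¹ • (e.symm (t, z) + e.symm (s, w))
          = e.symm ((2:ℝ)⁻¹ * (t + s), (2:ℝ)⁻¹ • (z + w)) := by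
        rw [hsymm, hsymm, hsymm, insertNth0_add, insertNth0_smul]
      rw [key] at h2
      exact h2
    have main := pl_dim1 Fb Gb Hb hFbm hGbm hHbm hbar
    have eF : ∫⁻ x, F x = ∫⁻ t, Fb t := by
      rw [hFbdef]
      rw [← lintegral_prod F' hF'm.aemeasurable]
      exact (mps.lintegral_comp hF).symm
    have eG : ∫⁻ x, G x = ∫⁻ s, Gb s := by
      rw [hGbdef, ← lintegral_prod G' hG'm.aemeasurable]
      exact (mps.lintegral_comp hG).symm
    have eH : ∫⁻ x, H x = ∫⁻ r, Hb r := by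
      rw [hHbdef, ← lintegral_prod H' hH'm.aemeasurable]
      exact (mps.lintegral_comp hH).symm
    rw [eF, eG, eH]
    exact main

/-- The Prékopa–Leindler inequality in exponential form: if `u, v, w` are measurable
with `w((x+y)/2) ≤ ½(u(x) + v(y))` for all `x, y`, then
`(∫ e^{-u})^{1/2} (∫ e^{-v})^{1/2} ≤ ∫ e^{-w}` (Lebesgue integrals over `ℝ^d`). -/
theorem prekopa_leindler_exp (d : ℕ) (u v w : EuclideanSpace ℝ (Fin d) → ℝ)
    (hu : Measurable u) (hv : Measurable v) (hw : Measurable w)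
    (h : ∀ x y : EuclideanSpace ℝ (Fin d),
      w ((2 : ℝ)⁻¹ • (x + y)) ≤ (u x + v y) / 2) :
    (∫⁻ x, ENNReal.ofReal (Real.exp (-u x))) ^ (1 / 2 : ℝ) *
      (∫⁻ x, ENNReal.ofReal (Real.exp (-v x))) ^ (1 / 2 : ℝ) ≤
      ∫⁻ x, ENNReal.ofReal (Real.exp (-w x)) := by
  set e := (MeasurableEquiv.toLp 2 (Fin d → ℝ)).symm with hedef
  have mp : MeasurePreserving e volume volume :=
    EuclideanSpace.volume_preserving_symm_measurableEquiv_toLp (Fin d)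
  set F : (Fin d → ℝ) → ℝ≥0∞ := fun x => ENNReal.ofReal (Real.exp (-u (e.symm x))) with hF
  set G : (Fin d → ℝ) → ℝ≥0∞ := fun x => ENNReal.ofReal (Real.exp (-v (e.symm x))) with hG
  set H : (Fin d → ℝ) → ℝ≥0∞ := fun x => ENNReal.ofReal (Real.exp (-w (e.symm x))) with hH
  have hFm : Measurable F :=
    ENNReal.measurable_ofReal.comp ((hu.comp e.symm.measurable).neg.exp)
  have hGm : Measurable G :=
    ENNReal.measurable_ofReal.comp ((hv.comp e.symm.measurable).neg.exp)
  have hHm : Measurable H :=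
    ENNReal.measurable_ofReal.comp ((hw.comp e.symm.measurable).neg.exp)
  have expkey : ∀ p q : ℝ, Real.exp (-p) ^ (1/2:ℝ) * Real.exp (-q) ^ (1/2:ℝ)
      = Real.exp (-((p + q)/2)) := by
    intro p q
    rw [← Real.exp_log (Real.exp_pos (-p)), ← Real.exp_mul, Real.log_exp,
      ← Real.exp_log (Real.exp_pos (-q)), ← Real.exp_mul, Real.log_exp, ← Real.exp_add]
    ring_nf
  have hyp : ∀ x y : Fin d → ℝ, F x ^ (1/2:ℝ) * G y ^ (1/2:ℝ) ≤ H ((2:ℝ)⁻¹ • (x + y)) := by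
    intro x y
    have h1 : e.symm (x + y) = e.symm x + e.symm y := rfl
    have h2 : e.symm ((2:ℝ)⁻¹ • (x + y)) = (2:ℝ)⁻¹ • e.symm (x + y) :=
      rfl
    rw [hF, hG, hH]
    simp only []
    rw [ENNReal.ofReal_rpow_of_nonneg (Real.exp_pos _).le (by norm_num),
      ENNReal.ofReal_rpow_of_nonneg (Real.exp_pos _).le (by norm_num),
      ← ENNReal.ofReal_mul (Real.rpow_nonneg (Real.exp_pos _).le _), expkey, h2, h1]
    apply ENNReal.ofReal_le_ofReal
    rw [Real.exp_le_exp, neg_le_neg_iff]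
    exact h (e.symm x) (e.symm y)
  have main := pl_pi d F G H hFm hGm hHm hyp
  have eu : ∫⁻ x, ENNReal.ofReal (Real.exp (-u x)) = ∫⁻ x, F x := by
    rw [← mp.lintegral_comp hFm]
    exact lintegral_congr fun a => by rw [hF]; simp
  have ev : ∫⁻ x, ENNReal.ofReal (Real.exp (-v x)) = ∫⁻ x, G x := by
    rw [← mp.lintegral_comp hGm]
    exact lintegral_congr fun a => by rw [hG]; simp
  have ew : ∫⁻ x, ENNReal.ofReal (Real.exp (-w x)) = ∫⁻ x, H x := by
    rw [← mp.lintegral_comp hHm]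
    exact lintegral_congr fun a => by rw [hH]; simp
  rw [eu, ev, ew]
  exact main
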